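/- Invariance of sample extremal depth under pointwise strictly monotone transformations: Let φ : I × ℝ → ℝ be such that for every t ∈ I the map y ↦ φ(t,y) is either strictly increasing or strictly decreasing. For h : I → ℝ, write Th : I → ℝ for the function (Th)(t) := φ(t, h(t)), and assume Tf_1, …, Tf_n and Tg are Borel measurable. Then for every Borel measurable g : I → ℝ and every t ∈ I, the pointwise sample depth of Tg with respect to the transformed sample (Tf_1, …, Tf_n) equals the pointwise sample depth of g with respect to (f_1, …, f_n); consequently the corresponding d-CDFs coincide, and the sample extremal depth of Tg computed from (Tf_1, …, Tf_n) equals the sample extremal depth of g computed from (f_1, …, f_n). -/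

import Mathlib

open MeasureTheory Set Filter

noncomputable section

/-- Pointwise sample depth
`D_g(t) = 1 - |#{i : f_i(t) < g(t)} - #{i : f_i(t) > g(t)}| / n`. -/
def pdepthS {n : ℕ} (f : Fin n → unitInterval → ℝ) (g : unitInterval → ℝ)
    (t : unitInterval) : ℝ :=
  1 - |(({i | f i t < g t} : Set (Fin n)).ncard : ℝ) -
        (({i | g t < f i t} : Set (Fin n)).ncard : ℝ)| / n

/-- Sample d-CDF `Φ_g(r) = Leb{t ∈ I : D_g(t) ≤ r}`. -/
def dcdfS {n : ℕ} (f : Fin n → unitInterval → ℝ) (g : unitInterval → ℝ)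
    (r : ℝ) : ℝ :=
  (volume {t : unitInterval | pdepthS f g t ≤ r}).toReal

/-- The set `R(g,h) = {r ∈ [0,1] : Φ_g(r) ≠ Φ_h(r)}` (sample version). -/
def RsetS {n : ℕ} (f : Fin n → unitInterval → ℝ) (g h : unitInterval → ℝ) :
    Set ℝ :=
  {r ∈ Icc (0:ℝ) 1 | dcdfS f g r ≠ dcdfS f h r}

/-- `g ≺ h` for the sample: `g` is more extreme than `h`. `g ⪰ h` is its
negation. -/
def precS {n : ℕ} (f : Fin n → unitInterval → ℝ) (g h : unitInterval → ℝ) :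
    Prop :=
  (RsetS f g h).Nonempty ∧
  ∃ δ > 0, ∀ r ∈ Ioo (sInf (RsetS f g h)) (sInf (RsetS f g h) + δ) ∩ Icc (0:ℝ) 1,
    dcdfS f h r < dcdfS f g r

/-- Sample extremal depth `ED(g) = #{i : g ⪰ f_i} / n`. -/
def edS {n : ℕ} (f : Fin n → unitInterval → ℝ) (g : unitInterval → ℝ) : ℝ :=
  (({i : Fin n | ¬ precS f g (f i)} : Set (Fin n)).ncard : ℝ) / n

/-- Sample minimal depth level `d_h = inf{r ∈ [0,1] : Φ_h(r) > 0}`. -/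
def dminS {n : ℕ} (f : Fin n → unitInterval → ℝ) (h : unitInterval → ℝ) : ℝ :=
  sInf {r ∈ Icc (0:ℝ) 1 | 0 < dcdfS f h r}

lemma pdepth_inv_aux {n : ℕ}
    (f : Fin n → unitInterval → ℝ)
    (φ : unitInterval → ℝ → ℝ)
    (hφ : ∀ t : unitInterval, StrictMono (φ t) ∨ StrictAnti (φ t))
    (T : (unitInterval → ℝ) → unitInterval → ℝ)
    (hT : ∀ (h : unitInterval → ℝ) (t : unitInterval), T h t = φ t (h t))
    (g : unitInterval → ℝ) (t : unitInterval) :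
    pdepthS (fun i => T (f i)) (T g) t = pdepthS f g t := by
  unfold pdepthS
  simp only [hT]
  rcases hφ t with hm | ha
  · have h1 : {i : Fin n | φ t (f i t) < φ t (g t)} = {i | f i t < g t} := by
      ext i; simp [hm.lt_iff_lt]
    have h2 : {i : Fin n | φ t (g t) < φ t (f i t)} = {i | g t < f i t} := by
      ext i; simp [hm.lt_iff_lt]
    rw [h1, h2]
  · have h1 : {i : Fin n | φ t (f i t) < φ t (g t)} = {i | g t < f i t} := by
      ext i; simp [ha.lt_iff_gt]
    have h2 : {i : Fin n | φ t (g t) < φ t (f i t)} = {i | f i t < g t} := by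
      ext i; simp [ha.lt_iff_gt]
    rw [h1, h2, abs_sub_comm]

lemma dcdf_inv_aux {n : ℕ}
    (f : Fin n → unitInterval → ℝ)
    (φ : unitInterval → ℝ → ℝ)
    (hφ : ∀ t : unitInterval, StrictMono (φ t) ∨ StrictAnti (φ t))
    (T : (unitInterval → ℝ) → unitInterval → ℝ)
    (hT : ∀ (h : unitInterval → ℝ) (t : unitInterval), T h t = φ t (h t))
    (g : unitInterval → ℝ) (r : ℝ) :
    dcdfS (fun i => T (f i)) (T g) r = dcdfS f g r := by
  unfold dcdfS
  congr 2
  ext t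
  simp [pdepth_inv_aux f φ hφ T hT g t]

/-- **Invariance of sample extremal depth under pointwise strictly monotone
transformations.** -/
theorem sample_ED_monotone_invariance {n : ℕ}
    (f : Fin n → unitInterval → ℝ) (hf : ∀ i, Measurable (f i))
    (g : unitInterval → ℝ) (hg : Measurable g)
    (φ : unitInterval → ℝ → ℝ)
    (hφ : ∀ t : unitInterval, StrictMono (φ t) ∨ StrictAnti (φ t))
    (T : (unitInterval → ℝ) → unitInterval → ℝ)
    (hT : ∀ (h : unitInterval → ℝ) (t : unitInterval), T h t = φ t (h t))
    (hTf : ∀ i, Measurable (T (f i))) (hTg : Measurable (T g)) :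
    (∀ t : unitInterval, pdepthS (fun i => T (f i)) (T g) t = pdepthS f g t) ∧
    (∀ r : ℝ, dcdfS (fun i => T (f i)) (T g) r = dcdfS f g r) ∧
    edS (fun i => T (f i)) (T g) = edS f g := by
  refine ⟨pdepth_inv_aux f φ hφ T hT g, dcdf_inv_aux f φ hφ T hT g, ?_⟩
  have hprec : ∀ i, precS (fun i => T (f i)) (T g) (T (f i)) ↔ precS f g (f i) := by
    intro i
    have hR : RsetS (fun i => T (f i)) (T g) (T (f i)) = RsetS f g (f i) := by
      ext r
      simp [RsetS, dcdf_inv_aux f φ hφ T hT g r, dcdf_inv_aux f φ hφ T hT (f i) r]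
    unfold precS
    rw [hR]
    constructor <;> rintro ⟨h1, δ, hδ, h2⟩ <;>
      exact ⟨h1, δ, hδ, fun r hr => by
        have := h2 r hr
        simpa [dcdf_inv_aux f φ hφ T hT g r, dcdf_inv_aux f φ hφ T hT (f i) r] using this⟩
  unfold edS
  have : {i : Fin n | ¬ precS (fun i => T (f i)) (T g) (T (f i))} =
      {i : Fin n | ¬ precS f g (f i)} := by
    ext i; simp [hprec i]
  rw [this]
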